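/- Let a₁ be a bounded sesquilinear form on V × W with ‖a₁‖_{S(V×W,𝕂)} ≤ C₀, satisfying the inf-sup condition with constant c > 0 (i.e. sup_{w ∈ W, ‖w‖_W = 1} |a₁(v,w)| ≥ c‖v‖_V for all v ∈ V) and nondegenerate in the second component (a₁(v,w) = 0 for all v ∈ V implies w = 0). Then there exists a topological isomorphism T : V → W* such that ‖T‖_{L(V,W*)} ≤ C₀, ‖T⁻¹‖_{L(W*,V)} ≤ 1/c, and a₁(v,w) = (Tv)(w) for all v ∈ V and w ∈ W. -/

import Mathlib

set_option maxHeartbeats 1000000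


/-- Banach-space version of the Lax–Milgram lemma (Lemma 3.1):
a bounded sesquilinear form `a₁` on `V × W` (encoded as a continuous linear map
from `V` into the space `W* = W →SL[starRingEnd 𝕂] 𝕂` of continuous antilinear
functionals on `W`) which satisfies the inf-sup condition with constant `c > 0`
and is nondegenerate in the second component induces a topological isomorphism
`T : V ≃ W*` with `‖T‖ ≤ C₀`, `‖T⁻¹‖ ≤ 1/c` and `a₁(v,w) = (Tv)(w)`. -/
theorem lax_milgram_banach
    {𝕂 V W : Type*} [RCLike 𝕂]
    [NormedAddCommGroup V] [NormedSpace 𝕂 V] [CompleteSpace V]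
    [NormedAddCommGroup W] [NormedSpace 𝕂 W] [CompleteSpace W] [Nontrivial W]
    (hrefl : Function.Surjective ⇑(NormedSpace.inclusionInDoubleDual 𝕂 W))
    (a₁ : V →L[𝕂] (W →SL[starRingEnd 𝕂] 𝕂))
    (C₀ : ℝ) (ha₁ : ‖a₁‖ ≤ C₀)
    (c : ℝ) (hc : 0 < c)
    (hinfsup : ∀ v : V, c * ‖v‖ ≤ ‖a₁ v‖)
    (hnondeg : ∀ w : W, (∀ v : V, a₁ v w = 0) → w = 0) :
    ∃ T : V ≃L[𝕂] (W →SL[starRingEnd 𝕂] 𝕂),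
      ‖(T : V →L[𝕂] (W →SL[starRingEnd 𝕂] 𝕂))‖ ≤ C₀ ∧
      ‖(T.symm : (W →SL[starRingEnd 𝕂] 𝕂) →L[𝕂] V)‖ ≤ 1 / c ∧
      ∀ (v : V) (w : W), a₁ v w = T v w := by
  -- notation
  set D := W →SL[starRingEnd 𝕂] 𝕂 with hD
  -- a₁ is antilipschitz
  have hanti : AntilipschitzWith (⟨c⁻¹, by positivity⟩ : NNReal) a₁ := by
    apply a₁.antilipschitz_of_bound
    intro v
    have := hinfsup v
    change ‖v‖ ≤ c⁻¹ * ‖a₁ v‖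
    rw [inv_mul_eq_div, le_div_iff₀ hc]
    linarith
  have hinj : Function.Injective a₁ := hanti.injective
  -- the range is closed
  have hclosed : IsClosed ((LinearMap.range (a₁ : V →ₗ[𝕂] D) : Submodule 𝕂 D) : Set D) := by
    have := hanti.isClosed_range a₁.uniformContinuous
    rw [LinearMap.coe_range]; exact this
  -- the range is all of D
  have hsurj : LinearMap.range (a₁ : V →ₗ[𝕂] D) = ⊤ := by
    by_contra hne
    obtain ⟨y, hy⟩ : ∃ y : D, y ∉ LinearMap.range (a₁ : V →ₗ[𝕂] D) := by
      by_contra h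
      push_neg at h
      exact hne (Submodule.eq_top_iff'.2 h)
    set S : Submodule 𝕂 D := LinearMap.range (a₁ : V →ₗ[𝕂] D) with hS
    haveI : IsClosed (S : Set D) := hclosed
    -- quotient map as a continuous linear map
    let π : D →L[𝕂] (D ⧸ S) := ⟨S.mkQ, continuous_quot_mk⟩
    have hx : (Submodule.Quotient.mk y : D ⧸ S) ≠ 0 := by
      simpa [Submodule.Quotient.mk_eq_zero] using hy
    obtain ⟨g, hg1, hg2⟩ := exists_dual_vector 𝕂 (Submodule.Quotient.mk y : D ⧸ S) (by
      intro h
      have hcl := (QuotientAddGroup.norm_mk_eq_zero_iff_mem_closure (S := S.toAddSubgroup) (m := y)).mp h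
      rw [Submodule.coe_toAddSubgroup, hclosed.closure_eq] at hcl
      exact hy hcl)
    -- ψ : functional on D vanishing on the range but not at y
    set ψ : D →L[𝕂] 𝕂 := g.comp π with hψ
    have hψ_range : ∀ v : V, ψ (a₁ v) = 0 := by
      intro v
      have : (Submodule.Quotient.mk (a₁ v) : D ⧸ S) = 0 :=
        (Submodule.Quotient.mk_eq_zero S).2 ⟨v, rfl⟩
      simp only [hψ, ContinuousLinearMap.comp_apply]
      have hπ : π (a₁ v) = (Submodule.Quotient.mk (a₁ v) : D ⧸ S) := rfl
      rw [hπ, this, map_zero]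
    have hψy : ψ y ≠ 0 := by
      have hπ : π y = (Submodule.Quotient.mk y : D ⧸ S) := rfl
      simp only [hψ, ContinuousLinearMap.comp_apply, hπ, hg2]
      have hnz : ‖(Submodule.Quotient.mk y : D ⧸ S)‖ ≠ 0 := by
        intro h
        have hcl := (QuotientAddGroup.norm_mk_eq_zero_iff_mem_closure (S := S.toAddSubgroup) (m := y)).mp h
        rw [Submodule.coe_toAddSubgroup, hclosed.closure_eq] at hcl
        exact hy hcl
      exact RCLike.ofReal_ne_zero.mpr hnz
    -- conjugation maps
    let J : (W →L[𝕂] 𝕂) → D := fun g' =>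
      { toFun := fun x => starRingEnd 𝕂 (g' x)
        map_add' := fun x y => by simp
        map_smul' := fun m x => by simp
        cont := RCLike.continuous_conj.comp g'.continuous }
    let J' : D → (W →L[𝕂] 𝕂) := fun f =>
      { toFun := fun x => starRingEnd 𝕂 (f x)
        map_add' := fun x y => by simp
        map_smul' := fun m x => by
          show starRingEnd 𝕂 (f (m • x)) = (RingHom.id 𝕂) m • starRingEnd 𝕂 (f x)
          rw [f.map_smulₛₗ]; simp
        cont := RCLike.continuous_conj.comp f.continuous }
    have hJJ' : ∀ f : D, J (J' f) = f := by
      intro f; ext x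
      show starRingEnd 𝕂 (starRingEnd 𝕂 (f x)) = f x
      simp
    -- Φ : element of the double dual of W
    let Φlin : (W →L[𝕂] 𝕂) →ₗ[𝕂] 𝕂 :=
      { toFun := fun g' => starRingEnd 𝕂 (ψ (J g'))
        map_add' := by
          intro f₁ f₂
          have : J (f₁ + f₂) = J f₁ + J f₂ := by
            ext x
            show starRingEnd 𝕂 ((f₁ + f₂) x) = (J f₁ + J f₂) x
            simp only [ContinuousLinearMap.add_apply, map_add]
            rfl
          show starRingEnd 𝕂 (ψ (J (f₁ + f₂))) =
            starRingEnd 𝕂 (ψ (J f₁)) + starRingEnd 𝕂 (ψ (J f₂))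
          rw [this, map_add, map_add]
        map_smul' := by
          intro m f
          have : J (m • f) = (starRingEnd 𝕂 m) • J f := by
            ext x
            show starRingEnd 𝕂 ((m • f) x) = ((starRingEnd 𝕂 m) • J f) x
            simp only [ContinuousLinearMap.smul_apply, map_mul, smul_eq_mul]
            rfl
          show starRingEnd 𝕂 (ψ (J (m • f))) =
            (RingHom.id 𝕂) m * starRingEnd 𝕂 (ψ (J f))
          rw [this, map_smul, smul_eq_mul, map_mul, RingHom.id_apply, RCLike.conj_conj] }
    have hJnorm : ∀ g' : W →L[𝕂] 𝕂, ‖J g'‖ ≤ ‖g'‖ := by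
      intro g'
      apply ContinuousLinearMap.opNorm_le_bound _ (norm_nonneg g')
      intro x
      calc ‖J g' x‖ = ‖starRingEnd 𝕂 (g' x)‖ := rfl
        _ = ‖g' x‖ := RCLike.norm_conj _
        _ ≤ ‖g'‖ * ‖x‖ := g'.le_opNorm x
    let Φ : (W →L[𝕂] 𝕂) →L[𝕂] 𝕂 :=
      LinearMap.mkContinuous Φlin ‖ψ‖ (fun g' => by
        show ‖starRingEnd 𝕂 (ψ (J g'))‖ ≤ ‖ψ‖ * ‖g'‖
        rw [RCLike.norm_conj]
        calc ‖ψ (J g')‖ ≤ ‖ψ‖ * ‖J g'‖ := ψ.le_opNorm _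
          _ ≤ ‖ψ‖ * ‖g'‖ := mul_le_mul_of_nonneg_left (hJnorm g') (norm_nonneg ψ))
    obtain ⟨w, hw⟩ := hrefl Φ
    have hw' : ∀ g' : W →L[𝕂] 𝕂, g' w = starRingEnd 𝕂 (ψ (J g')) := by
      intro g'
      have h1 : g' w = Φ g' := by rw [← hw]; rfl
      exact h1
    have hfw : ∀ f : D, ψ f = f w := by
      intro f
      have h3 := hw' (J' f)
      rw [hJJ' f] at h3
      have h2 : J' f w = starRingEnd 𝕂 (f w) := rfl
      rw [h2] at h3
      have h4 := congrArg (starRingEnd 𝕂) h3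
      simpa using h4.symm
    have hw0 : w = 0 := by
      apply hnondeg
      intro v
      have := hfw (a₁ v)
      rw [hψ_range v] at this
      exact this.symm
    apply hψy
    rw [hfw y, hw0, map_zero]
  -- construct the isomorphism
  let T : V ≃L[𝕂] (W →SL[starRingEnd 𝕂] 𝕂) :=
    ContinuousLinearEquiv.ofBijective a₁ (LinearMap.ker_eq_bot.2 hinj) hsurj
  refine ⟨T, ?_, ?_, ?_⟩
  · have : (T : V →L[𝕂] (W →SL[starRingEnd 𝕂] 𝕂)) = a₁ :=
      ContinuousLinearEquiv.coe_ofBijective a₁ (LinearMap.ker_eq_bot.2 hinj) hsurj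
    rw [this]
    exact ha₁
  · apply ContinuousLinearMap.opNorm_le_bound _ (div_nonneg zero_le_one hc.le)
    intro y
    have h1 : a₁ (T.symm y) = y :=
      ContinuousLinearEquiv.ofBijective_apply_symm_apply a₁
        (LinearMap.ker_eq_bot.2 hinj) hsurj y
    have h2 := hinfsup (T.symm y)
    rw [h1] at h2
    rw [one_div, inv_mul_eq_div, le_div_iff₀ hc]
    have hcoe : (T.symm : (W →SL[starRingEnd 𝕂] 𝕂) →L[𝕂] V) y = T.symm y := rfl
    rw [hcoe]
    linarith
  · intro v w
    have h := ContinuousLinearEquiv.coeFn_ofBijective a₁ (LinearMap.ker_eq_bot.2 hinj) hsurj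
    rw [congrFun h v]
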